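/- Let a > 0 be a real number. The function g(x) = log(a·x)/(a − 1/x) is strictly increasing on (0, ∞) away from the removable singularity at x = 1/a: for all real numbers x, y with 0 < x < y, x ≠ 1/a and y ≠ 1/a, one has g(x) < g(y). -/

import Mathlib

open Real

private lemma key_ineq (u : ℝ) (hu : 0 < u) (hu1 : u ≠ 1) : u - 1 < u * Real.log u := by
  have hne : (1 : ℝ) / u ≠ 1 := by
    intro h
    apply hu1
    field_simp at h
    linarith
  have h := Real.log_lt_sub_one_of_pos (x := 1 / u) (by positivity) hne
  rw [Real.log_div one_ne_zero hu.ne', Real.log_one] at h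
  have h2 := mul_lt_mul_of_pos_left h hu
  rw [mul_sub, mul_sub, mul_one_div_cancel hu.ne', mul_one, mul_zero] at h2
  linarith

private noncomputable def f (t : ℝ) : ℝ := t * Real.log t / (t - 1)

private lemma f_hasDeriv {t : ℝ} (ht0 : 0 < t) (ht1 : t ≠ 1) :
    HasDerivAt f ((t - 1 - Real.log t) / (t - 1) ^ 2) t := by
  have h1 : HasDerivAt (fun t : ℝ => t * Real.log t) (Real.log t + 1) t := by
    have := (hasDerivAt_id' t).mul (Real.hasDerivAt_log ht0.ne')
    exact this.congr_deriv (by rw [mul_inv_cancel₀ ht0.ne']; ring)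
  have h2 : HasDerivAt (fun t : ℝ => t - 1) 1 t := (hasDerivAt_id t).sub_const 1
  have h := h1.div h2 (sub_ne_zero.2 ht1)
  refine h.congr_deriv ?_
  ring

private lemma f_deriv_pos {t : ℝ} (ht0 : 0 < t) (ht1 : t ≠ 1) : 0 < deriv f t := by
  rw [(f_hasDeriv ht0 ht1).deriv]
  have h := Real.log_lt_sub_one_of_pos ht0 ht1
  have : (t - 1) ^ 2 > 0 := pow_two_pos_of_ne_zero (sub_ne_zero.2 ht1)
  exact div_pos (by linarith) this

private lemma f_mono_Ioo : StrictMonoOn f (Set.Ioo (0 : ℝ) 1) := by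
  apply strictMonoOn_of_deriv_pos (convex_Ioo 0 1)
  · intro t ht
    exact ((f_hasDeriv ht.1 ht.2.ne).differentiableAt).continuousAt.continuousWithinAt
  · rw [interior_Ioo]
    exact fun t ht => f_deriv_pos ht.1 ht.2.ne

private lemma f_mono_Ioi : StrictMonoOn f (Set.Ioi (1 : ℝ)) := by
  apply strictMonoOn_of_deriv_pos (convex_Ioi 1)
  · intro t ht
    exact ((f_hasDeriv (lt_trans one_pos ht) (ne_of_gt ht)).differentiableAt).continuousAt.continuousWithinAt
  · rw [interior_Ioi]
    exact fun t ht => f_deriv_pos (lt_trans one_pos ht) (ne_of_gt ht)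

private lemma f_lt_one {s : ℝ} (hs0 : 0 < s) (hs1 : s < 1) : f s < 1 := by
  have h := key_ineq s hs0 hs1.ne
  have hd : s - 1 < 0 := by linarith
  rw [f, div_lt_one_iff]
  exact Or.inr (Or.inr ⟨hd, by linarith⟩)

private lemma one_lt_f {t : ℝ} (ht1 : 1 < t) : 1 < f t := by
  have h := key_ineq t (lt_trans one_pos ht1) (ne_of_gt ht1)
  have hd : 0 < t - 1 := by linarith
  rw [f, lt_div_iff₀ hd]
  linarith

private lemma f_strict (s t : ℝ) (hs : 0 < s) (hst : s < t) (hs1 : s ≠ 1) (ht1 : t ≠ 1) :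
    f s < f t := by
  rcases lt_or_gt_of_ne ht1 with ht | ht
  · exact f_mono_Ioo ⟨hs, hst.trans ht⟩ ⟨hs.trans hst, ht⟩ hst
  · rcases lt_or_gt_of_ne hs1 with hsl | hsg
    · exact (f_lt_one hs hsl).trans (one_lt_f ht)
    · exact f_mono_Ioi hsg (hsg.trans hst) hst

/-- for `a > 0`, the function `g(x) = log(a·x)/(a − 1/x)` is strictly increasing
on `(0,∞)` away from the removable singularity at `x = 1/a`. -/
theorem log_mul_div_strictMono (a : ℝ) (ha : 0 < a) :
    ∀ x y : ℝ, 0 < x → x < y → x ≠ 1 / a → y ≠ 1 / a →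
      Real.log (a * x) / (a - 1 / x) < Real.log (a * y) / (a - 1 / y) := by
  intro x y hx hxy hx1 hy1
  have hy : 0 < y := hx.trans hxy
  have hax : a * x ≠ 1 := fun h => hx1 (by field_simp; linarith [h])
  have hay : a * y ≠ 1 := fun h => hy1 (by field_simp; linarith [h])
  have key : ∀ z : ℝ, 0 < z → a * z ≠ 1 →
      Real.log (a * z) / (a - 1 / z) = (1 / a) * f (a * z) := by
    intro z hz haz
    rw [f]
    have hz' : z ≠ 0 := hz.ne'
    have h1 : a * z - 1 ≠ 0 := sub_ne_zero.2 haz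
    field_simp
  rw [key x hx hax, key y hy hay]
  have := f_strict (a * x) (a * y) (by positivity) (by nlinarith) hax hay
  exact mul_lt_mul_of_pos_left this (by positivity)
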